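/- In the setting of a symmetric exchangeable (n+1)×(n+1) matrix A with row-conditionally symmetric nonconformity scores S_{n+1;j}, define the full conformal prediction set ℐ_{n+1;n} = { z : there exists a fill-in matrix Z with Z_{n+1,n} = z such that S_{n+1;n}(Ã(Z)) ≤ Q_{1-α}( (1/n) ∑_{j=1}^n δ_{S_{n+1;j}(Ã(Z))} ) }, where Ã(Z) replaces the missing entries of A (as indicated by the mask M) with the corresponding entries of Z. Then for every u ∈ [0,1], P(A_{n+1,n} ∈ ℐ_{n+1;n} | ξ_{n+1} = u) ≥ 1 - α. -/

import Mathlib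

open MeasureTheory ProbabilityTheory Finset

/-- The `k`-th smallest value (1-indexed, clamped to valid range) of `x`. -/
noncomputable def orderStat {n : ℕ} [NeZero n] (k : ℕ) (x : Fin n → ℝ) : ℝ :=
  x (Tuple.sort x ⟨min (k - 1) (n - 1), by
    have h := Nat.pos_of_ne_zero (NeZero.ne n); omega⟩)

/-- The lower `β`-quantile of the empirical distribution `(1/n) ∑ δ_{x j}`,
i.e. the `⌈β n⌉`-th smallest of the `x j`. -/
noncomputable def empQuantile {n : ℕ} [NeZero n] (β : ℝ) (x : Fin n → ℝ) : ℝ :=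
  orderStat ⌈β * n⌉₊ x
instance matrixMeasurableSpace {m k : Type*} [Fintype m] [Fintype k] :
    MeasurableSpace (Matrix m k ℝ) :=
  (inferInstance : MeasurableSpace (m → k → ℝ))
/-- Extension of a permutation of `Fin n` to `Fin (n+1)` fixing the last index. -/
def permExt {n : ℕ} (π : Equiv.Perm (Fin n)) (i : Fin (n + 1)) : Fin (n + 1) :=
  if h : (i : ℕ) < n then Fin.castSucc (π ⟨i, h⟩) else i

/-- `𝒜_{π,π}`: permute the first `n` rows and columns of an `(n+1)×(n+1)` matrix by
`π`, leaving index `n+1` fixed; `(𝒜_{π,π})_{i,j} = 𝒜_{π⁻¹(i), π⁻¹(j)}`. -/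
def matPerm {n : ℕ} (π : Equiv.Perm (Fin n))
    (A : Matrix (Fin (n + 1)) (Fin (n + 1)) ℝ) : Matrix (Fin (n + 1)) (Fin (n + 1)) ℝ :=
  fun i j => A (permExt π⁻¹ i) (permExt π⁻¹ j)
/-- Conditional probability of `s` given `ξ` (as a conditional expectation of the
indicator). -/
noncomputable def condProb {Ω : Type*} [MeasurableSpace Ω] (P : Measure Ω)
    (ξ : Ω → ℝ) (s : Set Ω) : Ω → ℝ :=
  P[s.indicator (fun _ => (1 : ℝ)) | MeasurableSpace.comap ξ inferInstance]

/-- Target row index `n+1` (the last row) of the `(n+2)×(n+2)` matrix. -/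
def rT (n : ℕ) : Fin (n + 2) := Fin.last (n + 1)

/-- Target column index `n` of the `(n+2)×(n+2)` matrix. -/
def cT (n : ℕ) : Fin (n + 2) := Fin.castSucc (Fin.last n)

/-- `Ã(Z) := A ∘ (1-M) + Z ∘ M`: fill the missing entries (where `M` is `true`)
of `A` with the corresponding entries of `Z`. -/
def fillIn {n : ℕ} (M : Matrix (Fin (n + 2)) (Fin (n + 2)) Bool)
    (A Z : Matrix (Fin (n + 2)) (Fin (n + 2)) ℝ) : Matrix (Fin (n + 2)) (Fin (n + 2)) ℝ :=
  fun i j => if M i j then Z i j else A i j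

/-- `Ã(Z; z)`: fill missing entries with `Z`, except that the target entry
`(n+1, n)` (and its symmetric counterpart `(n, n+1)`) is set to `z`. -/
def fillZ {n : ℕ} (M : Matrix (Fin (n + 2)) (Fin (n + 2)) Bool)
    (A Z : Matrix (Fin (n + 2)) (Fin (n + 2)) ℝ) (z : ℝ) :
    Matrix (Fin (n + 2)) (Fin (n + 2)) ℝ :=
  fun i j =>
    if (i = rT n ∧ j = cT n) ∨ (i = cT n ∧ j = rT n) then z
    else if M i j then Z i j else A i j

/-- The full conformal prediction set `ℐ_{n+1;n}`: all `z` for which some fill-in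
matrix `Z` with `Z_{n+1,n} = z` makes the target score at most the lower
`(1-α)`-quantile of the empirical score distribution. -/
noncomputable def fullConfSet {n : ℕ} (α : ℝ)
    (M : Matrix (Fin (n + 2)) (Fin (n + 2)) Bool)
    (S : Fin (n + 1) → Matrix (Fin (n + 2)) (Fin (n + 2)) ℝ → ℝ)
    (A : Matrix (Fin (n + 2)) (Fin (n + 2)) ℝ) : Set ℝ :=
  {z | ∃ Z : Matrix (Fin (n + 2)) (Fin (n + 2)) ℝ, Z (rT n) (cT n) = z ∧
    S (Fin.last n) (fillIn M A Z) ≤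
      empQuantile (1 - α) (fun j => S j (fillIn M A Z))}


set_option linter.unusedSectionVars false

section OrderStatAux
lemma orderStat_comp_perm {n : ℕ} [NeZero n] (k : ℕ) (x : Fin n → ℝ) (σ : Equiv.Perm (Fin n)) :
    orderStat k (x ∘ σ) = orderStat k x := by
  unfold orderStat
  have h := Tuple.comp_perm_comp_sort_eq_comp_sort (f := x) (σ := σ)
  exact congrFun h _

section OS
variable {N : ℕ} [NeZero N]

lemma orderStat_idx (k : ℕ) (hk1 : 1 ≤ k) (hkN : k ≤ N) :
    (⟨min (k - 1) (N - 1), by have h := Nat.pos_of_ne_zero (NeZero.ne N); omega⟩ : Fin N)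
      = ⟨k - 1, by omega⟩ := by
  have : min (k-1) (N-1) = k - 1 := by omega
  simp [this]

lemma baseSet_spec (k : ℕ) (hk1 : 1 ≤ k) (hkN : k ≤ N) (x : Fin N → ℝ) :
    ∃ s : Finset (Fin N), s.card = k ∧ ∀ j ∈ s, x j ≤ orderStat k x := by
  have hlt : ∀ m ∈ Finset.range k, m < N := fun m hm => lt_of_lt_of_le (Finset.mem_range.mp hm) hkN
  refine ⟨((Finset.range k).attachFin hlt).image (Tuple.sort x), ?_, ?_⟩
  · rw [Finset.card_image_of_injective _ (Tuple.sort x).injective, Finset.card_attachFin,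
      Finset.card_range]
  · intro j hj
    rcases Finset.mem_image.mp hj with ⟨i, hi, rfl⟩
    have hi' : (i : ℕ) < k := by
      exact Finset.mem_range.mp ((Finset.mem_attachFin hlt).mp hi)
    have hmono := Tuple.monotone_sort x
    unfold orderStat
    rw [orderStat_idx k hk1 hkN]
    exact hmono (show i ≤ (⟨k-1, by omega⟩ : Fin N) from by
      simp [Fin.le_def]; omega)

lemma count_le_orderStat (k : ℕ) (hk1 : 1 ≤ k) (hkN : k ≤ N) (x : Fin N → ℝ) :
    k ≤ (Finset.univ.filter (fun j => x j ≤ orderStat k x)).card := by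
  obtain ⟨s, hcard, hs⟩ := baseSet_spec k hk1 hkN x
  calc k = s.card := hcard.symm
    _ ≤ _ := Finset.card_le_card (fun j hj => Finset.mem_filter.mpr ⟨Finset.mem_univ _, hs j hj⟩)

lemma powersetCard_attach_nonempty (k : ℕ) (hkN : k ≤ N) :
    (Finset.powersetCard k (Finset.univ : Finset (Fin N))).attach.Nonempty := by
  rw [Finset.attach_nonempty_iff]
  obtain ⟨s, hs, hcard⟩ := Finset.exists_subset_card_eq (s := (Finset.univ : Finset (Fin N))) (n := k)
    (by simpa using hkN)
  exact ⟨s, Finset.mem_powersetCard.mpr ⟨hs, hcard⟩⟩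

lemma mem_powersetCard_nonempty {k : ℕ} (hk1 : 1 ≤ k) {s : Finset (Fin N)}
    (hs : s ∈ Finset.powersetCard k (Finset.univ : Finset (Fin N))) : s.Nonempty := by
  rw [← Finset.card_pos, (Finset.mem_powersetCard.mp hs).2]; omega

lemma orderStat_eq_inf_sup (k : ℕ) (hk1 : 1 ≤ k) (hkN : k ≤ N) (x : Fin N → ℝ) :
    orderStat k x = (Finset.powersetCard k (Finset.univ : Finset (Fin N))).attach.inf'
      (powersetCard_attach_nonempty k hkN)
      (fun s => s.1.sup' (mem_powersetCard_nonempty hk1 s.2) x) := by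
  apply le_antisymm
  · -- orderStat ≤ every sup'
    apply Finset.le_inf'
    intro s _
    -- exists i in s.1 with sort rank ≥ k-1
    have hcard : s.1.card = k := (Finset.mem_powersetCard.mp s.2).2
    by_contra hcon
    push_neg at hcon
    have hall : ∀ i ∈ s.1, x i < orderStat k x := by
      intro i hi
      calc x i ≤ s.1.sup' (mem_powersetCard_nonempty hk1 s.2) x := Finset.le_sup' x hi
        _ < orderStat k x := hcon
    -- every i ∈ s.1 has sorted index < k-1 : because x i < g(k-1) and g monotone
    have hmono := Tuple.monotone_sort x
    have hsub : s.1 ⊆ (Finset.univ.filter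
        (fun i : Fin N => ((Tuple.sort x).symm i : ℕ) < k - 1)) := by
      intro i hi
      refine Finset.mem_filter.mpr ⟨Finset.mem_univ _, ?_⟩
      by_contra hge
      push_neg at hge
      have : orderStat k x ≤ x i := by
        unfold orderStat
        rw [orderStat_idx k hk1 hkN]
        have := hmono (show (⟨k-1, by omega⟩ : Fin N) ≤ (Tuple.sort x).symm i from by
          simp [Fin.le_def]; omega)
        simpa using this
      exact absurd this (not_le.mpr (hall i hi))
    have hcard2 : (Finset.univ.filter
        (fun i : Fin N => ((Tuple.sort x).symm i : ℕ) < k - 1)).card ≤ k - 1 := by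
      have : (Finset.univ.filter (fun i : Fin N => ((Tuple.sort x).symm i : ℕ) < k - 1))
          = (Finset.univ.filter (fun j : Fin N => (j : ℕ) < k - 1)).image (Tuple.sort x) := by
        ext i
        simp only [Finset.mem_filter, Finset.mem_univ, true_and, Finset.mem_image]
        constructor
        · intro h; exact ⟨(Tuple.sort x).symm i, h, by simp⟩
        · rintro ⟨j, hj, rfl⟩; simpa using hj
      rw [this, Finset.card_image_of_injective _ (Tuple.sort x).injective]
      have hle : (Finset.univ.filter (fun j : Fin N => (j : ℕ) < k - 1)).card
          ≤ (Finset.range (k-1)).card :=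
        Finset.card_le_card_of_injOn (fun j => (j : ℕ))
          (by intro j hj; simp at hj ⊢; exact hj) (fun a _ b _ h => Fin.ext h)
      simpa using hle
    have := (Finset.card_le_card hsub).trans hcard2
    omega
  · -- inf' ≤ orderStat via the base set
    have hlt : ∀ m ∈ Finset.range k, m < N := fun m hm =>
      lt_of_lt_of_le (Finset.mem_range.mp hm) hkN
    set s0 : Finset (Fin N) := ((Finset.range k).attachFin hlt).image (Tuple.sort x) with hs0
    have hcard : s0.card = k := by
      rw [hs0, Finset.card_image_of_injective _ (Tuple.sort x).injective,
        Finset.card_attachFin, Finset.card_range]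
    have hmem : s0 ∈ Finset.powersetCard k (Finset.univ : Finset (Fin N)) :=
      Finset.mem_powersetCard.mpr ⟨Finset.subset_univ _, hcard⟩
    refine le_trans (Finset.inf'_le _ (Finset.mem_attach _ ⟨s0, hmem⟩)) ?_
    apply Finset.sup'_le
    intro j hj
    rcases Finset.mem_image.mp hj with ⟨i, hi, rfl⟩
    have hi' : (i : ℕ) < k := Finset.mem_range.mp ((Finset.mem_attachFin hlt).mp hi)
    have hmono := Tuple.monotone_sort x
    unfold orderStat
    rw [orderStat_idx k hk1 hkN]
    exact hmono (show i ≤ (⟨k-1, by omega⟩ : Fin N) from by simp [Fin.le_def]; omega)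

lemma measurable_finset_inf' {ι κ : Type*} [MeasurableSpace κ] (s : Finset ι) (hs : s.Nonempty)
    (f : ι → κ → ℝ) (hf : ∀ i ∈ s, Measurable (f i)) :
    Measurable (fun x => s.inf' hs (fun i => f i x)) := by
  refine Finset.Nonempty.cons_induction
    (motive := fun s hs => (∀ i ∈ s, Measurable (f i)) →
      Measurable (fun x => s.inf' hs (fun i => f i x)))
    (fun i hf => by simpa using hf i (Finset.mem_singleton_self i))
    (fun i s his hs ih hf => by
      rw [show (fun x => (Finset.cons i s his).inf' (Finset.cons_nonempty his) (fun j => f j x)) = fun x => min (f i x) (s.inf' hs (fun j => f j x)) from funext fun x => Finset.inf'_cons hs (fun j => f j x)]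
      exact Measurable.min (hf i (Finset.mem_cons_self i s))
        (ih (fun j hj => hf j (Finset.mem_cons_of_mem hj))))
    hs hf

lemma measurable_finset_sup' {ι κ : Type*} [MeasurableSpace κ] (s : Finset ι) (hs : s.Nonempty)
    (f : ι → κ → ℝ) (hf : ∀ i ∈ s, Measurable (f i)) :
    Measurable (fun x => s.sup' hs (fun i => f i x)) := by
  refine Finset.Nonempty.cons_induction
    (motive := fun s hs => (∀ i ∈ s, Measurable (f i)) →
      Measurable (fun x => s.sup' hs (fun i => f i x)))
    (fun i hf => by simpa using hf i (Finset.mem_singleton_self i))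
    (fun i s his hs ih hf => by
      rw [show (fun x => (Finset.cons i s his).sup' (Finset.cons_nonempty his) (fun j => f j x)) = fun x => max (f i x) (s.sup' hs (fun j => f j x)) from funext fun x => Finset.sup'_cons hs (fun j => f j x)]
      exact Measurable.max (hf i (Finset.mem_cons_self i s))
        (ih (fun j hj => hf j (Finset.mem_cons_of_mem hj))))
    hs hf

lemma measurable_orderStat (k : ℕ) (hk1 : 1 ≤ k) (hkN : k ≤ N) :
    Measurable (fun x : Fin N → ℝ => orderStat k x) := by
  have : (fun x : Fin N → ℝ => orderStat k x) = fun x =>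
      (Finset.powersetCard k (Finset.univ : Finset (Fin N))).attach.inf'
      (powersetCard_attach_nonempty k hkN)
      (fun s => s.1.sup' (mem_powersetCard_nonempty hk1 s.2) x) := by
    funext x; exact orderStat_eq_inf_sup k hk1 hkN x
  rw [this]
  exact measurable_finset_inf' _ _ _ (fun s _ =>
    measurable_finset_sup' _ _ _ (fun i _ => measurable_pi_apply i))
end OS

end OrderStatAux

section AnalyticAux
open Set ENNReal Filter Topology

namespace ConfAux

/-- Bounded-prefix set. -/
def eSet (L : List ℕ) : Set (ℕ → ℕ) := {x | ∀ i < L.length, x i ≤ L.getD i 0}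

lemma eSet_nil : eSet [] = univ := by ext x; simp [eSet]

lemma eSet_append (L : List ℕ) (N : ℕ) :
    eSet (L ++ [N]) = eSet L ∩ {x | x L.length ≤ N} := by
  ext x
  simp only [eSet, List.length_append, List.length_cons, List.length_nil, mem_setOf_eq,
    mem_inter_iff]
  constructor
  · intro h
    refine ⟨fun i hi => ?_, ?_⟩
    · have := h i (by omega)
      rwa [List.getD_append _ _ _ _ hi] at this
    · have := h L.length (by omega)
      rwa [List.getD_append_right _ _ _ _ le_rfl, Nat.sub_self] at this
  · rintro ⟨h1, h2⟩ i hi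
    rcases Nat.lt_or_ge i L.length with hlt | hge
    · rw [List.getD_append _ _ _ _ hlt]; exact h1 i hlt
    · have : i = L.length := by omega
      subst this
      rwa [List.getD_append_right _ _ _ _ le_rfl, Nat.sub_self]

lemma iUnion_eSet_append (L : List ℕ) : ⋃ N, eSet (L ++ [N]) = eSet L := by
  apply Set.Subset.antisymm
  · exact iUnion_subset fun N => by rw [eSet_append]; exact inter_subset_left
  · intro x hx
    refine mem_iUnion.mpr ⟨x L.length, ?_⟩
    rw [eSet_append]
    exact ⟨hx, show x L.length ≤ x L.length from le_rfl⟩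

lemma monotone_eSet_append (L : List ℕ) :
    Monotone (fun N => eSet (L ++ [N])) := by
  intro a b hab x hx
  simp only [eSet_append, mem_inter_iff, mem_setOf_eq] at hx ⊢
  exact ⟨hx.1, le_trans hx.2 hab⟩

variable {X : Type*} [MetricSpace X] [MeasurableSpace X] [BorelSpace X]
variable (μ : Measure X) (f : (ℕ → ℕ) → X) (c : ℝ≥0∞)

lemma step_exists (L : List ℕ) (h : c < μ (f '' eSet L)) :
    ∃ N, c < μ (f '' eSet (L ++ [N])) := by
  have h1 : f '' eSet L = ⋃ N, f '' eSet (L ++ [N]) := by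
    rw [← image_iUnion, iUnion_eSet_append]
  have h2 : Monotone fun N => f '' eSet (L ++ [N]) :=
    fun a b hab => image_mono (monotone_eSet_append L hab)
  rw [h1, h2.measure_iUnion] at h
  exact lt_iSup_iff.mp h

end ConfAux

namespace ConfAux
variable {X : Type*} [MetricSpace X] [MeasurableSpace X] [BorelSpace X]

/-- pick a bound extending `L` keeping outer measure above `c`. -/
noncomputable def pick (μ : Measure X) (f : (ℕ → ℕ) → X) (c : ℝ≥0∞) (L : List ℕ) : ℕ :=
  open Classical in
  if h : ∃ N, c < μ (f '' eSet (L ++ [N])) then h.choose else 0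

/-- the recursive sequence of prefix bound lists -/
noncomputable def capSeq (μ : Measure X) (f : (ℕ → ℕ) → X) (c : ℝ≥0∞) : ℕ → List ℕ
  | 0 => []
  | k + 1 => capSeq μ f c k ++ [pick μ f c (capSeq μ f c k)]

variable (μ : Measure X) (f : (ℕ → ℕ) → X) (c : ℝ≥0∞)

lemma capSeq_length (k : ℕ) : (capSeq μ f c k).length = k := by
  induction k with
  | zero => rfl
  | succ k ih => simp [capSeq, ih]

lemma capSeq_invariant (hbase : c < μ (f '' eSet [])) (k : ℕ) :
    c < μ (f '' eSet (capSeq μ f c k)) := by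
  induction k with
  | zero => exact hbase
  | succ k ih =>
      have hex : ∃ N, c < μ (f '' eSet (capSeq μ f c k ++ [N])) :=
        step_exists μ f c _ ih
      show c < μ (f '' eSet (capSeq μ f c k ++ [pick μ f c (capSeq μ f c k)]))
      rw [pick, dif_pos hex]
      exact hex.choose_spec

/-- the bound sequence -/
noncomputable def sigmaB (i : ℕ) : ℕ := (capSeq μ f c (i + 1)).getD i 0

lemma capSeq_getD (k i : ℕ) (h : i < k) :
    (capSeq μ f c k).getD i 0 = sigmaB μ f c i := by
  induction k with
  | zero => omega
  | succ k ih =>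
      rcases Nat.lt_or_ge i k with hlt | hge
      · show ((capSeq μ f c k) ++ _).getD i 0 = _
        rw [List.getD_append _ _ _ _ (by rw [capSeq_length]; exact hlt)]
        exact ih hlt
      · have : i = k := by omega
        subst this
        rfl

lemma eSet_capSeq (k : ℕ) :
    eSet (capSeq μ f c k) = {x | ∀ i < k, x i ≤ sigmaB μ f c i} := by
  ext x
  simp only [eSet, capSeq_length, mem_setOf_eq]
  exact ⟨fun h i hi => (capSeq_getD μ f c k i hi) ▸ h i hi,
    fun h i hi => (capSeq_getD μ f c k i hi).symm ▸ h i hi⟩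

end ConfAux


namespace ConfAux
variable {X : Type*} [MetricSpace X] [MeasurableSpace X] [BorelSpace X]
variable (μ : Measure X) (f : (ℕ → ℕ) → X) (c : ℝ≥0∞)

lemma capSeq_invariant' (hbase : c < μ (f '' eSet [])) (k : ℕ) :
    c < μ (f '' {x | ∀ i < k, x i ≤ sigmaB μ f c i}) := by
  rw [show {x : ℕ → ℕ | ∀ i < k, x i ≤ sigmaB μ f c i} = eSet (capSeq μ f c k) from
    (eSet_capSeq μ f c k).symm]
  exact capSeq_invariant μ f c hbase k
-- Diagonal argument
lemma iInter_closure_subset (hf : Continuous f) :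
    (⋂ k, closure (f '' {x | ∀ i < k, x i ≤ sigmaB μ f c i})) ⊆
      f '' {x | ∀ i, x i ≤ sigmaB μ f c i} := by
  intro y hy
  set σ := sigmaB μ f c
  have hpick : ∀ k : ℕ, ∃ x : ℕ → ℕ, (∀ i < k, x i ≤ σ i) ∧
      dist y (f x) < 1 / (k + 1) := by
    intro k
    have hyk := mem_iInter.mp hy k
    rcases Metric.mem_closure_iff.mp hyk (1 / (k + 1)) (by positivity) with ⟨b, hb, hdb⟩
    rcases hb with ⟨x, hx, rfl⟩
    exact ⟨x, hx, hdb⟩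
  choose x hx hdist using hpick
  -- truncations lie in the compact set K
  set K : Set (ℕ → ℕ) := Set.pi univ (fun i => Set.Iic (σ i)) with hK
  have hKcomp : IsCompact K := isCompact_univ_pi (fun i => (Set.finite_Iic (σ i)).isCompact)
  set t : ℕ → (ℕ → ℕ) := fun k i => min (x k i) (σ i) with ht
  have htK : ∀ k, t k ∈ K := fun k => by
    simp only [hK, Set.mem_univ_pi, Set.mem_Iic]; intro i; exact min_le_right _ _
  obtain ⟨z, hzK, φ, hφ, hconv⟩ := hKcomp.tendsto_subseq htK
  -- x ∘ φ also converges to z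
  have hxz : Tendsto (fun j => x (φ j)) atTop (𝓝 z) := by
    rw [tendsto_pi_nhds]
    intro i
    have h1 : Tendsto (fun j => t (φ j) i) atTop (𝓝 (z i)) :=
      (continuous_apply i).continuousAt.tendsto.comp hconv
    apply h1.congr'
    filter_upwards [eventually_ge_atTop (i + 1)] with j hj
    have hφj : i < φ j := lt_of_lt_of_le (Nat.lt_of_lt_of_le (Nat.lt_succ_self i) hj) (hφ.le_apply)
    show min (x (φ j) i) (σ i) = x (φ j) i
    exact min_eq_left (hx (φ j) i hφj)
  have hfz : Tendsto (fun j => f (x (φ j))) atTop (𝓝 (f z)) := (hf.tendsto z).comp hxz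
  have hfy : Tendsto (fun j => f (x (φ j))) atTop (𝓝 y) := by
    rw [tendsto_iff_dist_tendsto_zero]
    have hb : Tendsto (fun j : ℕ => 1 / ((φ j : ℝ) + 1)) atTop (𝓝 0) :=
      tendsto_one_div_add_atTop_nhds_zero_nat.comp hφ.tendsto_atTop
    refine squeeze_zero (fun j => dist_nonneg) (fun j => ?_) hb
    rw [dist_comm]
    exact le_of_lt (hdist (φ j))
  have : y = f z := tendsto_nhds_unique hfy hfz
  exact this ▸ ⟨z, by simpa [hK, Pi.le_def] using hzK, rfl⟩


lemma exists_compact_of_lt [IsFiniteMeasure μ] (hf : Continuous f)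
    {c : ℝ≥0∞} (hc : c < μ (Set.range f)) :
    ∃ K : Set X, IsCompact K ∧ K ⊆ Set.range f ∧ c ≤ μ K := by
  have hbase : c < μ (f '' eSet []) := by
    rwa [eSet_nil, image_univ]
  set σ := sigmaB μ f c with hσ
  set E : ℕ → Set (ℕ → ℕ) := fun k => {x | ∀ i < k, x i ≤ σ i} with hE
  have hinv : ∀ k, c < μ (f '' E k) := capSeq_invariant' μ f c hbase
  set C : ℕ → Set X := fun k => closure (f '' E k) with hC
  have hanti : Antitone C := by
    intro a b hab
    apply closure_mono
    apply Set.image_mono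
    intro x hx i hi
    exact hx i (lt_of_lt_of_le hi hab)
  have hCmeas : ∀ k, NullMeasurableSet (C k) μ :=
    fun k => isClosed_closure.measurableSet.nullMeasurableSet
  have hiInf : μ (⋂ k, C k) = ⨅ k, μ (C k) :=
    hanti.measure_iInter hCmeas ⟨0, measure_ne_top μ _⟩
  have hlow : c ≤ μ (⋂ k, C k) := by
    rw [hiInf]
    exact le_iInf fun k => le_trans (hinv k).le (measure_mono subset_closure)
  set K0 : Set (ℕ → ℕ) := {x | ∀ i, x i ≤ σ i} with hK0
  have hsub : (⋂ k, C k) ⊆ f '' K0 := iInter_closure_subset μ f c hf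
  refine ⟨f '' K0, ?_, ?_, le_trans hlow (measure_mono hsub)⟩
  · have : IsCompact K0 := by
      have : K0 = Set.pi univ (fun i => Set.Iic (σ i)) := by
        ext x; simp [hK0, Pi.le_def]
      rw [this]
      exact isCompact_univ_pi (fun i => (Set.finite_Iic (σ i)).isCompact)
    exact this.image hf
  · exact image_subset_range f K0

theorem analyticSet_nullMeasurableSet
    {s : Set X} (hs : MeasureTheory.AnalyticSet s) (μ : Measure X) [IsFiniteMeasure μ] :
    NullMeasurableSet s μ := by
  rw [MeasureTheory.AnalyticSet] at hs
  rcases hs with rfl | ⟨f, hf, rfl⟩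
  · exact MeasurableSet.empty.nullMeasurableSet
  have hKm : ∀ m : ℕ, ∃ K : Set X, IsCompact K ∧ K ⊆ Set.range f ∧
      μ (Set.range f) ≤ μ K + ((m : ℝ≥0∞) + 1)⁻¹ := by
    intro m
    by_cases h : μ (Set.range f) ≤ ((m : ℝ≥0∞) + 1)⁻¹
    · exact ⟨∅, isCompact_empty, empty_subset _, by simpa using h⟩
    · push_neg at h
      have hinvne : ((m : ℝ≥0∞) + 1)⁻¹ ≠ 0 := ENNReal.inv_ne_zero.mpr (by simp)
      have hne0 : μ (Set.range f) ≠ 0 := fun h0 => by simp [h0] at h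
      have hc : μ (Set.range f) - ((m : ℝ≥0∞) + 1)⁻¹ < μ (Set.range f) :=
        ENNReal.sub_lt_self (measure_ne_top μ _) hne0 hinvne
      obtain ⟨K, hKc, hKs, hKle⟩ := exists_compact_of_lt μ f hf hc
      exact ⟨K, hKc, hKs, tsub_le_iff_right.mp hKle⟩
  choose K hKc hKs hKle using hKm
  set A := ⋃ m, K m with hA
  have hAs : A ⊆ Set.range f := iUnion_subset hKs
  have hAmeas : MeasurableSet A :=
    MeasurableSet.iUnion (fun m => (hKc m).isClosed.measurableSet)
  have hμA : μ (Set.range f) ≤ μ A := by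
    apply ENNReal.le_of_forall_pos_le_add
    intro ε hε _
    obtain ⟨n, hn⟩ := ENNReal.exists_inv_nat_lt (show (ε : ℝ≥0∞) ≠ 0 by
      simpa using hε.ne')
    calc μ (Set.range f) ≤ μ (K n) + ((n : ℝ≥0∞) + 1)⁻¹ := hKle n
      _ ≤ μ A + ε := add_le_add (measure_mono (subset_iUnion K n))
          (le_of_lt (lt_of_le_of_lt (ENNReal.inv_le_inv.mpr (by simp)) hn))
  have hAeq : μ A = μ (Set.range f) := le_antisymm (measure_mono hAs) hμA
  have hdiff : μ (Set.range f \ A) = 0 := by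
    have h1 : Set.range f \ A ⊆ toMeasurable μ (Set.range f) \ A :=
      diff_subset_diff_left (subset_toMeasurable _ _)
    have h2 : μ (toMeasurable μ (Set.range f) \ A) = 0 := by
      rw [measure_diff (hAs.trans (subset_toMeasurable _ _)) hAmeas.nullMeasurableSet
        (measure_ne_top μ _), measure_toMeasurable, hAeq, tsub_self]
    exact measure_mono_null h1 h2
  have hAe : A =ᵐ[μ] Set.range f := by
    rw [MeasureTheory.ae_eq_set]
    constructor
    · rw [diff_eq_empty.mpr hAs]; exact measure_empty
    · exact hdiff
  exact hAmeas.nullMeasurableSet.congr hAe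
end ConfAux
end AnalyticAux

/-- The sub-σ-algebra generated by `ξ`. -/
def condSigma {Ω : Type*} (ξ : Ω → ℝ) : MeasurableSpace Ω :=
  MeasurableSpace.comap ξ inferInstance

/-- row-conditional validity of full conformal matrix prediction:
`P(A_{n+1,n} ∈ ℐ_{n+1;n} ∣ ξ_{n+1}) ≥ 1 - α` (almost everywhere, i.e. for a.e.
value `u` of `ξ_{n+1}`), under row-conditionally symmetric scores and
exchangeability of the first `n+1` row/column indices conditionally on `ξ_{n+1}`. -/
theorem fullConformal_row_conditional_coverage
    {Ω : Type*} [MeasurableSpace Ω] (P : Measure Ω) [IsProbabilityMeasure P]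
    (n : ℕ) (A : Ω → Matrix (Fin (n + 2)) (Fin (n + 2)) ℝ) (ξ : Ω → ℝ)
    (hA : Measurable A) (hξ : Measurable ξ)
    (hAsym : ∀ ω i j, A ω i j = A ω j i)
    (M : Matrix (Fin (n + 2)) (Fin (n + 2)) Bool)
    (hMsym : ∀ i j, M i j = M j i) (hMtarget : M (rT n) (cT n) = true)
    (S : Fin (n + 1) → Matrix (Fin (n + 2)) (Fin (n + 2)) ℝ → ℝ)
    (hSmeas : ∀ j, Measurable (S j))
    (hsym : ∀ (π : Equiv.Perm (Fin (n + 1)))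
      (𝒜 : Matrix (Fin (n + 2)) (Fin (n + 2)) ℝ) (j : Fin (n + 1)),
      S j 𝒜 = S (π j) (matPerm π 𝒜))
    (hexch : ∀ π : Equiv.Perm (Fin (n + 1)),
      P.map (fun ω => (ξ ω, matPerm π (A ω))) = P.map (fun ω => (ξ ω, A ω)))
    (α : ℝ) (hα : α ∈ Set.Ioo (0 : ℝ) 1) :
    ∀ᵐ ω ∂P, 1 - α ≤
      condProb P ξ {ω' | A ω' (rT n) (cT n) ∈ fullConfSet α M S (A ω')} ω := by
  classical
  rename_i mΩ hprob
  obtain ⟨hα0, hα1⟩ := hα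
  have hNpos : (0:ℝ) < ((n+1 : ℕ):ℝ) := by exact_mod_cast Nat.succ_pos n
  have h1α0 : (0:ℝ) < 1 - α := by linarith
  set k : ℕ := ⌈(1 - α) * ((n+1 : ℕ) : ℝ)⌉₊ with hk
  have hk1 : 1 ≤ k := Nat.one_le_iff_ne_zero.mpr (by
    simp only [hk, ne_eq, Nat.ceil_eq_zero, not_le]
    positivity)
  have hkN : k ≤ n+1 := Nat.ceil_le.mpr (by nlinarith)
  have hkge : (1 - α) * ((n+1:ℕ):ℝ) ≤ (k:ℝ) := Nat.le_ceil _
  -- the empirical quantile as a function of the matrix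
  set q : Matrix (Fin (n+2)) (Fin (n+2)) ℝ → ℝ :=
    fun 𝒜 => orderStat k (fun j : Fin (n+1) => S j 𝒜) with hq
  have hqmeas : Measurable q :=
    (measurable_orderStat k hk1 hkN).comp (measurable_pi_lambda _ (fun j => hSmeas j))
  set Bj : Fin (n+1) → Set (Matrix (Fin (n+2)) (Fin (n+2)) ℝ) :=
    fun j => {𝒜 | S j 𝒜 ≤ q 𝒜} with hBj
  have hBmeas : ∀ j, MeasurableSet (Bj j) := fun j => measurableSet_le (hSmeas j) hqmeas
  set E : Fin (n+1) → Set Ω := fun j => A ⁻¹' (Bj j) with hE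
  have hEmeas : ∀ j, MeasurableSet (E j) := fun j => hA (hBmeas j)
  have hm : condSigma ξ ≤ mΩ := hξ.comap_le
  -- permutation behaviour of scores and quantile
  have hscore : ∀ (π : Equiv.Perm (Fin (n+1))) 𝒜 (i : Fin (n+1)),
      S i (matPerm π 𝒜) = S (π⁻¹ i) 𝒜 := by
    intro π 𝒜 i
    have h := hsym π 𝒜 (π⁻¹ i)
    rw [show π (π⁻¹ i) = i from π.apply_symm_apply i] at h
    exact h.symm
  have hqperm : ∀ (π : Equiv.Perm (Fin (n+1))) 𝒜, q (matPerm π 𝒜) = q 𝒜 := by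
    intro π 𝒜
    have h1 : (fun j : Fin (n+1) => S j (matPerm π 𝒜)) = (fun j : Fin (n+1) => S j 𝒜) ∘ ⇑(π⁻¹) := by
      funext i
      exact hscore π 𝒜 i
    show orderStat k (fun j : Fin (n+1) => S j (matPerm π 𝒜)) = orderStat k (fun j : Fin (n+1) => S j 𝒜)
    rw [h1]
    exact orderStat_comp_perm k _ π⁻¹
  have hBperm : ∀ (π : Equiv.Perm (Fin (n+1))) (j : Fin (n+1)) 𝒜,
      matPerm π 𝒜 ∈ Bj j ↔ 𝒜 ∈ Bj (π⁻¹ j) := by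
    intro π j 𝒜
    simp only [hBj, Set.mem_setOf_eq, hscore, hqperm]
  have hmpmeas : ∀ π : Equiv.Perm (Fin (n+1)),
      Measurable (matPerm π : Matrix (Fin (n+2)) (Fin (n+2)) ℝ → _) := by
    intro π
    apply measurable_pi_lambda
    intro i
    apply measurable_pi_lambda
    intro j
    exact (measurable_pi_apply _).comp (measurable_pi_apply _)
  -- key exchangeability identity
  have hkey : ∀ (j : Fin (n+1)) (t : Set ℝ), MeasurableSet t →
      P (ξ ⁻¹' t ∩ E j) = P (ξ ⁻¹' t ∩ E (Fin.last n)) := by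
    intro j t ht
    set π := Equiv.swap j (Fin.last n) with hπ
    have hπinv : π⁻¹ = π := Equiv.swap_inv j (Fin.last n)
    have hπj : π⁻¹ j = Fin.last n := by
      rw [hπinv, hπ]
      exact Equiv.swap_apply_left j _
    have hpair1 : Measurable (fun ω => (ξ ω, matPerm π (A ω))) :=
      hξ.prodMk ((hmpmeas π).comp hA)
    have hpair2 : Measurable (fun ω => (ξ ω, A ω)) := hξ.prodMk hA
    have hts : MeasurableSet (t ×ˢ Bj j) := ht.prod (hBmeas j)
    have h1 := congrArg (fun μ : Measure (ℝ × Matrix (Fin (n+2)) (Fin (n+2)) ℝ) =>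
      μ (t ×ˢ Bj j)) (hexch π)
    rw [Measure.map_apply hpair1 hts, Measure.map_apply hpair2 hts] at h1
    have h2 : (fun ω => (ξ ω, matPerm π (A ω))) ⁻¹' (t ×ˢ Bj j)
        = ξ ⁻¹' t ∩ E (Fin.last n) := by
      ext ω
      simp only [Set.mem_preimage, Set.mem_prod, Set.mem_inter_iff, hE]
      exact and_congr_right fun _ => by rw [hBperm π j (A ω), hπj]
    have h3 : (fun ω => (ξ ω, A ω)) ⁻¹' (t ×ˢ Bj j) = ξ ⁻¹' t ∩ E j := by
      ext ω
      simp only [Set.mem_preimage, Set.mem_prod, Set.mem_inter_iff, hE]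
    rw [h2, h3] at h1
    exact h1.symm
  -- set-integral helper
  have hint : ∀ j : Fin (n+1), Integrable ((E j).indicator (fun _ => (1:ℝ))) P :=
    fun j => (integrable_const 1).indicator (hEmeas j)
  have hsetint : ∀ (Es u : Set Ω), MeasurableSet Es → MeasurableSet u →
      ∫ x in u, Es.indicator (fun _ => (1:ℝ)) x ∂P = (P (Es ∩ u)).toReal := by
    intro Es u hEs hu
    rw [show Es.indicator (fun _ => (1:ℝ)) = Es.indicator (1 : Ω → ℝ) from rfl,
      integral_indicator_one hEs, measureReal_def, Measure.restrict_apply hEs]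
  -- all conditional expectations agree
  have hcond : ∀ j : Fin (n+1),
      P[(E j).indicator (fun _ => (1:ℝ)) | condSigma ξ]
        =ᵐ[P] P[(E (Fin.last n)).indicator (fun _ => (1:ℝ)) | condSigma ξ] := by
    intro j
    refine (ae_eq_condExp_of_forall_setIntegral_eq hm (hint j)
      (fun s _ _ => integrable_condExp.integrableOn)
      (fun s hs hμs => ?_)
      stronglyMeasurable_condExp.aestronglyMeasurable).symm
    obtain ⟨t, ht, rfl⟩ := hs
    have hs' : MeasurableSet[condSigma ξ] (ξ ⁻¹' t) := ⟨t, ht, rfl⟩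
    rw [setIntegral_condExp hm (hint (Fin.last n)) hs',
      hsetint _ _ (hEmeas _) (hξ ht), hsetint _ _ (hEmeas _) (hξ ht),
      Set.inter_comm (E (Fin.last n)), Set.inter_comm (E j)]
    exact congrArg ENNReal.toReal (hkey j t ht).symm
  -- pointwise count bound
  have hptsum : ∀ ω, (k : ℝ) ≤ ∑ j : Fin (n+1), (E j).indicator (fun _ => (1:ℝ)) ω := by
    intro ω
    have hcount := count_le_orderStat k hk1 hkN (fun j : Fin (n+1) => S j (A ω))
    have hiff : ∀ j : Fin (n+1), ω ∈ E j ↔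
        S j (A ω) ≤ orderStat k (fun i : Fin (n+1) => S i (A ω)) := fun j => Iff.rfl
    calc (k : ℝ) ≤ ((Finset.univ.filter (fun j : Fin (n+1) =>
          S j (A ω) ≤ orderStat k (fun i : Fin (n+1) => S i (A ω)))).card : ℝ) := by
          exact_mod_cast hcount
      _ = ∑ j : Fin (n+1), (E j).indicator (fun _ => (1:ℝ)) ω := by
          rw [Finset.card_filter]
          push_cast
          refine Finset.sum_congr rfl (fun j _ => ?_)
          rw [Set.indicator_apply]
          exact (if_congr (hiff j).symm rfl rfl)
  have hsum_int : Integrable (fun ω => ∑ j : Fin (n+1), (E j).indicator (fun _ => (1:ℝ)) ω) P := by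
    have := integrable_finset_sum (μ := P) Finset.univ
      (fun (j : Fin (n+1)) (_ : j ∈ Finset.univ) => hint j)
    simpa using this
  have hmono := condExp_mono (m := condSigma ξ) (μ := P) (integrable_const ((k:ℝ))) hsum_int
    (Filter.Eventually.of_forall hptsum)
  rw [condExp_const hm] at hmono
  have hsum_eq : P[fun ω => ∑ j : Fin (n+1), (E j).indicator (fun _ => (1:ℝ)) ω | condSigma ξ]
      =ᵐ[P] fun ω => ∑ j : Fin (n+1), (P[(E j).indicator (fun _ => (1:ℝ)) | condSigma ξ]) ω := by
    have h := condExp_finsetSum (m := condSigma ξ) (μ := P) (s := Finset.univ)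
      (f := fun (j : Fin (n+1)) => (E j).indicator (fun _ => (1:ℝ)))
      (fun j _ => hint j)
    have h1 : (∑ j : Fin (n+1), (E j).indicator (fun _ => (1:ℝ)))
        = fun ω => ∑ j : Fin (n+1), (E j).indicator (fun _ => (1:ℝ)) ω := by
      funext ω
      simp [Finset.sum_apply]
    rw [h1] at h
    refine h.trans (Filter.Eventually.of_forall (fun ω => ?_))
    simp [Finset.sum_apply]
  have hae_all : ∀ᵐ ω ∂P, ∀ j : Fin (n+1),
      (P[(E j).indicator (fun _ => (1:ℝ)) | condSigma ξ]) ω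
        = (P[(E (Fin.last n)).indicator (fun _ => (1:ℝ)) | condSigma ξ]) ω :=
    ae_all_iff.mpr (fun j => hcond j)
  have hbound : ∀ᵐ ω ∂P, 1 - α ≤
      (P[(E (Fin.last n)).indicator (fun _ => (1:ℝ)) | condSigma ξ]) ω := by
    filter_upwards [hmono, hsum_eq, hae_all] with ω h1 h2 h3
    rw [h2] at h1
    have h4 : ∑ j : Fin (n+1), (P[(E j).indicator (fun _ => (1:ℝ)) | condSigma ξ]) ω
        = ((n+1:ℕ):ℝ) * (P[(E (Fin.last n)).indicator (fun _ => (1:ℝ)) | condSigma ξ]) ω := by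
      rw [Finset.sum_congr rfl (fun j _ => h3 j), Finset.sum_const, Finset.card_univ,
        Fintype.card_fin, nsmul_eq_mul]
    rw [h4] at h1
    have h5 : (1 - α) * ((n+1:ℕ):ℝ) ≤ (P[(E (Fin.last n)).indicator (fun _ => (1:ℝ)) | condSigma ξ]) ω * ((n+1:ℕ):ℝ) := by
      rw [mul_comm _ (((n+1:ℕ):ℝ))]
      linarith
    exact le_of_mul_le_mul_right h5 hNpos
  -- the target event contains E (last n)
  set T : Set Ω := {ω' | A ω' (rT n) (cT n) ∈ fullConfSet α M S (A ω')} with hT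
  have hET : E (Fin.last n) ⊆ T := by
    intro ω hω
    have hfix : fillIn M (A ω) (A ω) = A ω := by
      funext i j
      simp only [fillIn]
      split <;> rfl
    show A ω (rT n) (cT n) ∈ fullConfSet α M S (A ω)
    refine ⟨A ω, rfl, ?_⟩
    rw [hfix]
    exact hω
  -- null-measurability of T via analytic sets
  let g : Ω → (Fin (n+2) → Fin (n+2) → ℝ) := fun ω => A ω
  have hg : Measurable g := hA
  let Bset : Set (Fin (n+2) → Fin (n+2) → ℝ) :=
    {𝒜 | 𝒜 (rT n) (cT n) ∈ fullConfSet α M S 𝒜}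
  have hTB : T = g ⁻¹' Bset := rfl
  let C : Set ((Fin (n+2) → Fin (n+2) → ℝ) × (Fin (n+2) → Fin (n+2) → ℝ)) :=
    {p | p.2 (rT n) (cT n) = p.1 (rT n) (cT n) ∧
      S (Fin.last n) (fillIn M p.1 p.2) ≤ q (fillIn M p.1 p.2)}
  have hfillmeas : Measurable (fun p : (Fin (n+2) → Fin (n+2) → ℝ) × (Fin (n+2) → Fin (n+2) → ℝ)
      => (fillIn M p.1 p.2 : Matrix (Fin (n+2)) (Fin (n+2)) ℝ)) := by
    apply measurable_pi_lambda
    intro i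
    apply measurable_pi_lambda
    intro j
    show Measurable (fun p : (Fin (n+2) → Fin (n+2) → ℝ) × (Fin (n+2) → Fin (n+2) → ℝ) =>
      if M i j then p.2 i j else p.1 i j)
    cases hM : M i j
    · simp only [hM, Bool.false_eq_true, if_false]
      exact (measurable_pi_apply j).comp ((measurable_pi_apply i).comp measurable_fst)
    · simp only [hM, if_true]
      exact (measurable_pi_apply j).comp ((measurable_pi_apply i).comp measurable_snd)
  have hCmeas : MeasurableSet C := by
    have h1 : MeasurableSet {p : (Fin (n+2) → Fin (n+2) → ℝ) × (Fin (n+2) → Fin (n+2) → ℝ) |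
        p.2 (rT n) (cT n) = p.1 (rT n) (cT n)} :=
      measurableSet_eq_fun
        ((measurable_pi_apply (cT n)).comp ((measurable_pi_apply (rT n)).comp measurable_snd))
        ((measurable_pi_apply (cT n)).comp ((measurable_pi_apply (rT n)).comp measurable_fst))
    have h2 : MeasurableSet {p : (Fin (n+2) → Fin (n+2) → ℝ) × (Fin (n+2) → Fin (n+2) → ℝ) |
        S (Fin.last n) (fillIn M p.1 p.2) ≤ q (fillIn M p.1 p.2)} :=
      measurableSet_le ((hSmeas _).comp hfillmeas) (hqmeas.comp hfillmeas)
    exact h1.inter h2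
  have hBC : Bset = Prod.fst '' C := by
    ext 𝒜
    simp only [Set.mem_image, Set.mem_setOf_eq, Bset, C]
    constructor
    · rintro ⟨Z, hZ1, hZ2⟩
      exact ⟨(𝒜, Z), ⟨hZ1, hZ2⟩, rfl⟩
    · rintro ⟨⟨a, Z⟩, ⟨h1, h2⟩, rfl⟩
      exact ⟨Z, h1, h2⟩
  have hBana : MeasureTheory.AnalyticSet Bset := by
    rw [hBC]
    exact hCmeas.analyticSet.image_of_continuous continuous_fst
  haveI : IsProbabilityMeasure (P.map g) := Measure.isProbabilityMeasure_map hg.aemeasurable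
  have hBnull : NullMeasurableSet Bset (P.map g) :=
    ConfAux.analyticSet_nullMeasurableSet hBana (P.map g)
  obtain ⟨Bm, hBm, hBae⟩ := hBnull
  have hdiffs := (MeasureTheory.ae_eq_set.mp hBae)
  have hTae : T =ᵐ[P] g ⁻¹' Bm := by
    rw [MeasureTheory.ae_eq_set]
    constructor
    · have he : T \ g ⁻¹' Bm = g ⁻¹' (Bset \ Bm) := by rw [hTB]; rfl
      rw [he]
      exact le_antisymm ((Measure.le_map_apply (μ := P) hg.aemeasurable (Bset \ Bm)).trans
        hdiffs.1.le) (zero_le)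
    · have he : g ⁻¹' Bm \ T = g ⁻¹' (Bm \ Bset) := by rw [hTB]; rfl
      rw [he]
      exact le_antisymm ((Measure.le_map_apply (μ := P) hg.aemeasurable (Bm \ Bset)).trans
        hdiffs.2.le) (zero_le)
  have hTind : T.indicator (fun _ => (1:ℝ)) =ᵐ[P] (g ⁻¹' Bm).indicator (fun _ => (1:ℝ)) :=
    indicator_ae_eq_of_ae_eq_set hTae
  have hBmmeas : MeasurableSet (g ⁻¹' Bm) := hg hBm
  have hle : (E (Fin.last n)).indicator (fun _ => (1:ℝ))
      ≤ᵐ[P] (g ⁻¹' Bm).indicator (fun _ => (1:ℝ)) := by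
    filter_upwards [hTind] with ω hω
    rw [← hω]
    exact Set.indicator_le_indicator_of_subset hET (fun _ => zero_le_one) ω
  have hcond_mono := condExp_mono (m := condSigma ξ) (μ := P) (hint (Fin.last n))
    ((integrable_const (1:ℝ)).indicator hBmmeas) hle
  have hcond_T : P[T.indicator (fun _ => (1:ℝ)) | condSigma ξ]
      =ᵐ[P] P[(g ⁻¹' Bm).indicator (fun _ => (1:ℝ)) | condSigma ξ] := condExp_congr_ae hTind
  show ∀ᵐ ω ∂P, 1 - α ≤ (P[T.indicator (fun _ => (1:ℝ)) | condSigma ξ]) ω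
  filter_upwards [hbound, hcond_mono, hcond_T] with ω h1 h2 h3
  calc 1 - α ≤ (P[(E (Fin.last n)).indicator (fun _ => (1:ℝ)) | condSigma ξ]) ω := h1
    _ ≤ (P[(g ⁻¹' Bm).indicator (fun _ => (1:ℝ)) | condSigma ξ]) ω := h2
    _ = (P[T.indicator (fun _ => (1:ℝ)) | condSigma ξ]) ω := h3.symm
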